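/- Assume 0 < ε ≤ 2/(nL(2C+1)) for some constant C > 0. Let x ∈ Δ be a feasible non-stationary point of min_{x∈Δ} f(x), let j ∈ N(x) ∩ J(x), let I = {1,…,n} \ {j}, and let Â(x) ⊆ A(x). Define the feasible point x̃ by x̃_i = 0 for i ∈ Â(x), x̃_i = x_i for i ∈ I \ Â(x), and x̃_j = x_j + Σ_{i∈Â(x)} x_i. Then f(x̃) − f(x) ≤ −CL‖x̃ − x‖². -/

import Mathlib

open scoped BigOperators RealInnerProductSpace

noncomputable section

/-- The unit simplex in `ℝⁿ`. -/
def unitSimplex (n : ℕ) : Set (EuclideanSpace ℝ (Fin n)) :=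
  {x | (∑ i, x i) = 1 ∧ ∀ i, 0 ≤ x i}

/-- A point of the unit simplex is stationary for `min_{x ∈ Δ} f(x)` if the KKT
conditions hold. -/
def IsStationaryPt {n : ℕ} (f : EuclideanSpace ℝ (Fin n) → ℝ)
    (x : EuclideanSpace ℝ (Fin n)) : Prop :=
  x ∈ unitSimplex n ∧
    ∃ (lam : ℝ) (mu : Fin n → ℝ),
      (∀ i, gradient f x i - lam - mu i = 0) ∧
      (∑ i, mu i * x i) = 0 ∧
      (∀ i, 0 ≤ mu i)

lemma unitSimplex_convex (n : ℕ) : Convex ℝ (unitSimplex n) := by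
  intro p hp q hq a b ha hb hab
  constructor
  · have : ∀ i, (a • p + b • q) i = a * p i + b * q i := fun i => rfl
    simp only [this, Finset.sum_add_distrib, ← Finset.mul_sum, hp.1, hq.1]
    simpa using hab
  · intro i
    have : (a • p + b • q) i = a * p i + b * q i := rfl
    rw [this]
    have := hp.2 i; have := hq.2 i
    positivity

lemma descent_lemma {n : ℕ} (f : EuclideanSpace ℝ (Fin n) → ℝ) (hf : ContDiff ℝ 1 f)
    (L : ℝ) (s : Set (EuclideanSpace ℝ (Fin n))) (hs : Convex ℝ s)
    (hLip : ∀ x ∈ s, ∀ y ∈ s, ‖gradient f x - gradient f y‖ ≤ L * ‖x - y‖)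
    (x y : EuclideanSpace ℝ (Fin n)) (hx : x ∈ s) (hy : y ∈ s) :
    f y ≤ f x + ⟪gradient f x, y - x⟫ + L / 2 * ‖y - x‖ ^ 2 := by
  set v := y - x with hv
  have hdf : Differentiable ℝ f := hf.differentiable one_ne_zero
  have hfd : ∀ p w, fderiv ℝ f p w = ⟪gradient f p, w⟫ := by
    intro p w
    have h1 : fderiv ℝ f p = InnerProductSpace.toDual ℝ _ (gradient f p) :=
      ((InnerProductSpace.toDual ℝ _).apply_symm_apply _).symm
    rw [h1, InnerProductSpace.toDual_apply_apply]
  have hseg : ∀ t ∈ Set.Icc (0:ℝ) 1, x + t • v ∈ s := by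
    intro t ht
    have h := hs hx hy (by linarith [ht.2] : (0:ℝ) ≤ 1 - t) ht.1 (by ring)
    convert h using 1
    simp only [hv]
    module
  have hd : ∀ t : ℝ, HasDerivAt (fun t : ℝ => f (x + t • v))
      (⟪gradient f (x + t • v), v⟫) t := by
    intro t
    have hc : HasDerivAt (fun t : ℝ => x + t • v) v t := by
      simpa using ((hasDerivAt_id t).smul_const v).const_add x
    have := (hdf (x + t • v)).hasFDerivAt.comp_hasDerivAt t hc
    rw [← hfd]; exact this
  have hcont : Continuous fun t : ℝ => ⟪gradient f (x + t • v), v⟫ := by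
    have hgc : Continuous (gradient f) := by
      have := (hf.continuous_fderiv one_ne_zero)
      exact (InnerProductSpace.toDual ℝ (EuclideanSpace ℝ (Fin n))).symm.continuous.comp this
    exact (Continuous.inner (hgc.comp (by continuity)) continuous_const)
  have hkey : f (x + (1:ℝ) • v) - f (x + (0:ℝ) • v)
      = ∫ t in (0:ℝ)..1, ⟪gradient f (x + t • v), v⟫ := by
    exact (intervalIntegral.integral_eq_sub_of_hasDerivAt (fun t _ => hd t)
      (hcont.intervalIntegrable 0 1)).symm
  have hbound : ∫ t in (0:ℝ)..1, ⟪gradient f (x + t • v), v⟫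
      ≤ ∫ t in (0:ℝ)..1, (⟪gradient f x, v⟫ + L * ‖v‖ ^ 2 * t) := by
    have hInt2 : IntervalIntegrable (fun t : ℝ => ⟪gradient f x, v⟫ + L * ‖v‖ ^ 2 * t)
        MeasureTheory.volume 0 1 :=
      intervalIntegrable_const.add ((intervalIntegral.intervalIntegrable_id).const_mul _)
    apply intervalIntegral.integral_mono_on (by norm_num) (hcont.intervalIntegrable 0 1) hInt2
    intro t ht
    have hmem := hseg t ht
    have h1 : ⟪gradient f (x + t • v), v⟫ - ⟪gradient f x, v⟫
        = ⟪gradient f (x + t • v) - gradient f x, v⟫ := by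
      rw [inner_sub_left]
    have h2 : ⟪gradient f (x + t • v) - gradient f x, v⟫
        ≤ ‖gradient f (x + t • v) - gradient f x‖ * ‖v‖ :=
      real_inner_le_norm _ _
    have h3 : ‖gradient f (x + t • v) - gradient f x‖ ≤ L * ‖x + t • v - x‖ :=
      hLip _ hmem _ hx
    have h4 : ‖x + t • v - x‖ = t * ‖v‖ := by
      rw [add_sub_cancel_left, norm_smul, Real.norm_eq_abs, abs_of_nonneg ht.1]
    have h5 : ‖gradient f (x + t • v) - gradient f x‖ * ‖v‖ ≤ L * ‖v‖ ^ 2 * t := by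
      rw [h4] at h3
      nlinarith [norm_nonneg v, mul_le_mul_of_nonneg_right h3 (norm_nonneg v)]
    linarith
  have hint : ∫ t in (0:ℝ)..1, (⟪gradient f x, v⟫ + L * ‖v‖ ^ 2 * t)
      = ⟪gradient f x, v⟫ + L / 2 * ‖v‖ ^ 2 := by
    rw [intervalIntegral.integral_add (intervalIntegrable_const)
      ((intervalIntegral.intervalIntegrable_id).const_mul _)]
    rw [intervalIntegral.integral_const, intervalIntegral.integral_const_mul,
      integral_id]
    norm_num
    ring
  have hy' : x + (1:ℝ) • v = y := by simp [hv]
  have hx' : x + (0:ℝ) • v = x := by simp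
  rw [hy', hx'] at hkey
  linarith [hbound, hkey, hint.le, hint.ge]

/-- Sufficient decrease obtained by setting the estimated active variables to zero and
transferring their mass onto a variable `j ∈ N(x) ∩ J(x)`:
`f(x̃) - f(x) ≤ -C L ‖x̃ - x‖²`, provided `0 < ε ≤ 2 / (n L (2C + 1))`. -/
theorem active_set_decrease (n : ℕ) (f : EuclideanSpace ℝ (Fin n) → ℝ)
    (hf : ContDiff ℝ 1 f) (L C eps : ℝ) (hL : 0 < L) (hC : 0 < C)
    (hLip : ∀ x ∈ unitSimplex n, ∀ y ∈ unitSimplex n,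
      ‖gradient f x - gradient f y‖ ≤ L * ‖x - y‖)
    (heps : 0 < eps) (heps' : eps ≤ 2 / (n * L * (2 * C + 1)))
    (x : EuclideanSpace ℝ (Fin n)) (hx : x ∈ unitSimplex n)
    (hnonstat : ¬ IsStationaryPt f x)
    (j : Fin n)
    -- `j ∈ N(x)`:
    (hjN : eps * ∑ i, gradient f x i * (EuclideanSpace.single j (1 : ℝ) i - x i) < x j)
    -- `j ∈ J(x)`:
    (hjJ : ∀ i, gradient f x j ≤ gradient f x i)
    (Ahat : Finset (Fin n))
    -- `Â(x) ⊆ A(x)`: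
    (hAhat : ∀ i ∈ Ahat,
      x i ≤ eps * ∑ l, gradient f x l * (EuclideanSpace.single i (1 : ℝ) l - x l))
    (xt : EuclideanSpace ℝ (Fin n))
    (hxt : xt = fun i => if i = j then x j + ∑ h ∈ Ahat, x h
      else if i ∈ Ahat then 0 else x i) :
    f xt - f x ≤ -(C * L) * ‖xt - x‖ ^ 2 := by
  classical
  set g : Fin n → ℝ := fun i => gradient f x i with hgdef
  set S : ℝ := ∑ h ∈ Ahat, x h with hSdef
  set Q : ℝ := ∑ h ∈ Ahat, x h ^ 2 with hQdef
  have hn : 0 < n := by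
    rcases Nat.eq_zero_or_pos n with h | h
    · exfalso
      have h1 := hx.1
      subst h
      simp at h1
    · exact h
  -- simplify the sums appearing in the active set conditions
  have hsum : ∀ i : Fin n,
      (∑ l, gradient f x l * (EuclideanSpace.single i (1:ℝ) l - x l))
      = g i - ∑ l, g l * x l := by
    intro i
    have hterm : ∀ l : Fin n, gradient f x l * EuclideanSpace.single i (1:ℝ) l
        = if l = i then g l else 0 := by
      intro l
      rw [EuclideanSpace.single_apply]
      split <;> simp [hgdef]
    simp only [mul_sub, Finset.sum_sub_distrib, hterm, Finset.sum_ite_eq',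
      Finset.mem_univ, if_true, hgdef]
  have hjA : j ∉ Ahat := by
    intro hj
    have h1 := hAhat j hj
    linarith
  have hgbar : g j ≤ ∑ l, g l * x l := by
    calc g j = ∑ l, g j * x l := by rw [← Finset.mul_sum, hx.1, mul_one]
    _ ≤ ∑ l, g l * x l :=
        Finset.sum_le_sum fun l _ => mul_le_mul_of_nonneg_right (hjJ l) (hx.2 l)
  have hkey : ∀ i ∈ Ahat, x i ^ 2 ≤ eps * (x i * (g i - g j)) := by
    intro i hi
    have h1 : x i ≤ eps * (g i - ∑ l, g l * x l) := by
      have h := hAhat i hi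
      rwa [hsum i] at h
    have h2 : x i ≤ eps * (g i - g j) := by nlinarith
    nlinarith [hx.2 i]
  -- componentwise values of xt - x
  have hxti : ∀ i : Fin n, xt i = if i = j then x j + S
      else if i ∈ Ahat then 0 else x i := fun i => by rw [hxt]
  have hvj : (xt - x) j = S := by
    have : (xt - x) j = xt j - x j := rfl
    rw [this, hxti j]
    simp
  have hvA : ∀ i ∈ Ahat, (xt - x) i = -x i := by
    intro i hi
    have hij : i ≠ j := fun h => hjA (h ▸ hi)
    have : (xt - x) i = xt i - x i := rfl
    rw [this, hxti i, if_neg hij, if_pos hi]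
    ring
  have hv0 : ∀ i : Fin n, i ∉ insert j Ahat → (xt - x) i = 0 := by
    intro i hi
    simp only [Finset.mem_insert, not_or] at hi
    have : (xt - x) i = xt i - x i := rfl
    rw [this, hxti i, if_neg hi.1, if_neg hi.2]
    ring
  -- xt is feasible
  have hS0 : 0 ≤ S := Finset.sum_nonneg fun h _ => hx.2 h
  have hQ0 : 0 ≤ Q := Finset.sum_nonneg fun h _ => sq_nonneg _
  have hvsum : ∀ (F : Fin n → ℝ), (∑ i, F i * (xt - x) i)
      = F j * S + ∑ i ∈ Ahat, F i * (-x i) := by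
    intro F
    rw [← Finset.sum_subset (Finset.subset_univ (insert j Ahat))
      (fun i _ hi => by rw [hv0 i hi, mul_zero]),
      Finset.sum_insert hjA, hvj]
    congr 1
    exact Finset.sum_congr rfl fun i hi => by rw [hvA i hi]
  have hxt_mem : xt ∈ unitSimplex n := by
    constructor
    · have h1 : ∀ i : Fin n, xt i = x i + (1 : ℝ) * (xt - x) i := by
        intro i
        have : (xt - x) i = xt i - x i := rfl
        rw [this]; ring
      calc (∑ i, xt i) = ∑ i, (x i + (1:ℝ) * (xt - x) i) :=
            Finset.sum_congr rfl fun i _ => h1 i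
        _ = (∑ i, x i) + ∑ i, (1:ℝ) * (xt - x) i := Finset.sum_add_distrib
        _ = 1 + ((1:ℝ) * S + ∑ i ∈ Ahat, (1:ℝ) * (-x i)) := by rw [hx.1, hvsum (fun _ => 1)]
        _ = 1 := by simp [hSdef]
    · intro i
      rw [hxti i]
      split
      · have := hx.2 j; linarith
      · split
        · exact le_refl 0
        · exact hx.2 i
  -- the inner product
  have hinner : ⟪gradient f x, xt - x⟫ = ∑ i ∈ Ahat, x i * (g j - g i) := by
    have h1 : ⟪gradient f x, xt - x⟫ = ∑ i, g i * (xt - x) i := by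
      rw [PiLp.inner_apply]
      exact Finset.sum_congr rfl fun i _ => by simp only [RCLike.inner_apply, conj_trivial, hgdef]; ring
    rw [h1, hvsum g, hSdef, Finset.mul_sum]
    rw [← Finset.sum_add_distrib]
    exact Finset.sum_congr rfl fun i _ => by ring
  -- norm
  have hnorm : ‖xt - x‖ ^ 2 = S ^ 2 + Q := by
    have h1 : ‖xt - x‖ ^ 2 = ∑ i, ((xt - x) i) * ((xt - x) i) := by
      rw [← real_inner_self_eq_norm_sq, PiLp.inner_apply]
      simp only [RCLike.inner_apply, conj_trivial]
    rw [h1, ← Finset.sum_subset (Finset.subset_univ (insert j Ahat))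
      (fun i _ hi => by rw [hv0 i hi, mul_zero]),
      Finset.sum_insert hjA, hvj]
    have : (∑ i ∈ Ahat, (xt - x) i * (xt - x) i) = Q := by
      rw [hQdef]
      exact Finset.sum_congr rfl fun i hi => by rw [hvA i hi]; ring
    rw [this]; ring
  -- eps * inner ≤ -Q
  have hIQ : eps * ⟪gradient f x, xt - x⟫ ≤ -Q := by
    rw [hinner, Finset.mul_sum, hQdef]
    have : -∑ i ∈ Ahat, x i ^ 2 = ∑ i ∈ Ahat, -(x i ^ 2) := by
      rw [Finset.sum_neg_distrib]
    rw [this]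
    refine Finset.sum_le_sum fun i hi => ?_
    have := hkey i hi
    nlinarith
  -- card bound
  have hcard : (Ahat.card : ℝ) ≤ (n : ℝ) - 1 := by
    have h1 : Ahat ⊆ Finset.univ.erase j := by
      intro i hi
      exact Finset.mem_erase.mpr ⟨fun h => hjA (h ▸ hi), Finset.mem_univ i⟩
    have h2 := Finset.card_le_card h1
    rw [Finset.card_erase_of_mem (Finset.mem_univ j), Finset.card_univ, Fintype.card_fin] at h2
    have h3 : (Ahat.card : ℝ) ≤ ((n - 1 : ℕ) : ℝ) := Nat.cast_le.mpr h2
    rwa [Nat.cast_sub hn, Nat.cast_one] at h3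
  have hSQ : S ^ 2 + Q ≤ (n : ℝ) * Q := by
    have h1 : S ^ 2 ≤ (Ahat.card : ℝ) * Q := by
      have := sq_sum_le_card_mul_sum_sq (s := Ahat) (f := fun i => x i)
      exact_mod_cast this
    nlinarith
  -- eps bound
  have hepsD : eps * ((n : ℝ) * L * (2 * C + 1)) ≤ 2 := by
    have hD : 0 < (n : ℝ) * L * (2 * C + 1) := by
      have : (0:ℝ) < n := Nat.cast_pos.mpr hn
      positivity
    rw [le_div_iff₀ hD] at heps'
    exact heps'
  -- descent lemma
  have hdesc := descent_lemma f hf L (unitSimplex n) (unitSimplex_convex n) hLip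
    x xt hx hxt_mem
  rw [hnorm]
  rw [hnorm] at hdesc
  set I : ℝ := ⟪gradient f x, xt - x⟫ with hIdef
  -- final arithmetic
  have h3 : eps * ((C * L + L / 2) * (S ^ 2 + Q)) ≤ Q := by
    have hA := mul_le_mul_of_nonneg_left hSQ
      (show (0:ℝ) ≤ eps * (C * L + L / 2) by positivity)
    nlinarith [hQ0]
  have h4 : eps * I ≤ eps * (-(C * L) * (S ^ 2 + Q) - L / 2 * (S ^ 2 + Q)) := by
    have : eps * (-(C * L) * (S ^ 2 + Q) - L / 2 * (S ^ 2 + Q))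
        = -(eps * ((C * L + L / 2) * (S ^ 2 + Q))) := by ring
    rw [this]
    linarith
  have h5 : I ≤ -(C * L) * (S ^ 2 + Q) - L / 2 * (S ^ 2 + Q) :=
    (mul_le_mul_iff_right₀ heps).mp h4
  linarith
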